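/- Let Φ be the flow generated by a smooth vector field on a closed (compact, boundaryless) smooth manifold M, and let R be the chain recurrent set of Φ. If R has finitely many connected components R¹, …, R^r, then Σ_{i=1}^r cat_M(Rⁱ) ≥ cat(M). -/

import Mathlib

open Set Filter
open scoped Manifold Topology

/-- A smooth vector field on `M`: a smooth section of the tangent bundle. -/
def IsSmoothVF {n : ℕ} {M : Type} [TopologicalSpace M]
    [ChartedSpace (EuclideanSpace ℝ (Fin n)) M]
    [IsManifold (𝓡 n) (⊤ : ℕ∞) M]
    (v : (x : M) → TangentSpace (𝓡 n) x) : Prop :=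
  ContMDiff (𝓡 n) (𝓡 n).tangent (⊤ : ℕ∞)
    (fun x => (⟨x, v x⟩ : TangentBundle (𝓡 n) M))

/-- `γ : ℝ → M` is an integral curve of the vector field `v`:
`γ'(t) = v(γ(t))` for all `t`. -/
def IsIntCurve {n : ℕ} {M : Type} [TopologicalSpace M]
    [ChartedSpace (EuclideanSpace ℝ (Fin n)) M]
    [IsManifold (𝓡 n) (⊤ : ℕ∞) M]
    (v : (x : M) → TangentSpace (𝓡 n) x) (γ : ℝ → M) : Prop :=
  ∀ t : ℝ, HasMFDerivAt 𝓘(ℝ, ℝ) (𝓡 n) γ t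
    ((1 : ℝ →L[ℝ] ℝ).smulRight (v (γ t)))

/-- `Φ : M × ℝ → M` (curried) is the flow generated by the vector field `v`:
it is continuous, starts at the identity, satisfies the group law, and each
trajectory `t ↦ Φ x t` is an integral curve of `v`. -/
def IsFlowOf {n : ℕ} {M : Type} [TopologicalSpace M]
    [ChartedSpace (EuclideanSpace ℝ (Fin n)) M]
    [IsManifold (𝓡 n) (⊤ : ℕ∞) M]
    (v : (x : M) → TangentSpace (𝓡 n) x) (Φ : M → ℝ → M) : Prop :=
  Continuous (fun p : M × ℝ => Φ p.1 p.2) ∧ (∀ x : M, Φ x 0 = x) ∧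
    (∀ (x : M) (s t : ℝ), Φ x (s + t) = Φ (Φ x s) t) ∧
    ∀ x : M, IsIntCurve v (Φ x)

/-- The chain recurrent set of the flow `Φ` (with respect to the metric `d`):
points `x` such that for all `δ > 0` and `T > 1` there is a `(δ,T)`-chain
`x = x₀, x₁, …, x_N = x`, with times `tᵢ ≥ T` and
`d(x_{i-1}·t_i, x_i) < δ`. -/
def chainRecurrentSet {M : Type} [MetricSpace M] (Φ : M → ℝ → M) : Set M :=
  {x : M | ∀ δ > (0 : ℝ), ∀ T > (1 : ℝ),
    ∃ (N : ℕ) (xs : ℕ → M) (ts : ℕ → ℝ), 0 < N ∧ xs 0 = x ∧ xs N = x ∧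
      ∀ i < N, T ≤ ts i ∧ dist (Φ (xs i) (ts i)) (xs (i + 1)) < δ}

/-- The inclusion of `V` into `X` is null-homotopic. -/
def NullhomotopicIn (X : Type) [TopologicalSpace X] (V : Set X) : Prop :=
  ∃ (H : X × ℝ → X) (x₀ : X), ContinuousOn H (V ×ˢ Set.Icc (0 : ℝ) 1) ∧
    (∀ v ∈ V, H (v, 0) = v) ∧ (∀ v ∈ V, H (v, 1) = x₀)

/-- `cat_X(A) ≤ k`: the subset `A` can be covered by `k` open subsets of `X`,
each null-homotopic in `X`. -/
def CatLE (X : Type) [TopologicalSpace X] (A : Set X) (k : ℕ) : Prop :=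
  ∃ V : Fin k → Set X, (∀ i, IsOpen (V i)) ∧ A ⊆ ⋃ i, V i ∧
    ∀ i, NullhomotopicIn X (V i)

/-- `cat_X(A)`, the Lusternik–Schnirelmann category of `A` in `X`. -/
noncomputable def catSet (X : Type) [TopologicalSpace X] (A : Set X) : ℕ :=
  sInf {k | CatLE X A k}

/-- `cat(X)`, the Lusternik–Schnirelmann category of `X`. -/
noncomputable def catSpace (X : Type) [TopologicalSpace X] : ℕ :=
  catSet X Set.univ

open Set Filter Metric
section ChainMachinery
variable {M : Type} [MetricSpace M]

/-- chains with jumps < δ and step times ≥ T -/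
inductive Chn (Φ : M → ℝ → M) (δ T : ℝ) : M → M → Prop
  | single (a : M) (t : ℝ) (b : M) (ht : T ≤ t) (hd : dist (Φ a t) b < δ) : Chn Φ δ T a b
  | cons (a : M) (t : ℝ) (c b : M) (ht : T ≤ t) (hd : dist (Φ a t) c < δ)
      (h : Chn Φ δ T c b) : Chn Φ δ T a b

/-- chains with jumps < δ and step times in [T, 2T] -/
inductive ChnB (Φ : M → ℝ → M) (δ T : ℝ) : M → M → Prop
  | single (a : M) (t : ℝ) (b : M) (ht : T ≤ t) (ht2 : t ≤ 2*T)
      (hd : dist (Φ a t) b < δ) : ChnB Φ δ T a b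
  | cons (a : M) (t : ℝ) (c b : M) (ht : T ≤ t) (ht2 : t ≤ 2*T)
      (hd : dist (Φ a t) c < δ) (h : ChnB Φ δ T c b) : ChnB Φ δ T a b

variable {Φ : M → ℝ → M} {δ T δ' T' : ℝ} {a b c : M}

theorem Chn.trans (h1 : Chn Φ δ T a b) (h2 : Chn Φ δ T b c) : Chn Φ δ T a c := by
  induction h1 with
  | single a t b ht hd => exact .cons a t b c ht hd h2
  | cons a t d b ht hd h ih => exact .cons a t d c ht hd (ih h2)

theorem ChnB.trans (h1 : ChnB Φ δ T a b) (h2 : ChnB Φ δ T b c) : ChnB Φ δ T a c := by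
  induction h1 with
  | single a t b ht ht2 hd => exact .cons a t b c ht ht2 hd h2
  | cons a t d b ht ht2 hd h ih => exact .cons a t d c ht ht2 hd (ih h2)

theorem Chn.mono (hδ : δ ≤ δ') (hT : T' ≤ T) (h : Chn Φ δ T a b) : Chn Φ δ' T' a b := by
  induction h with
  | single a t b ht hd => exact .single a t b (hT.trans ht) (hd.trans_le hδ)
  | cons a t d b ht hd h ih => exact .cons a t d b (hT.trans ht) (hd.trans_le hδ) ih

theorem ChnB.toChn (h : ChnB Φ δ T a b) : Chn Φ δ T a b := by
  induction h with
  | single a t b ht ht2 hd => exact .single a t b ht hd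
  | cons a t d b ht ht2 hd h ih => exact .cons a t d b ht hd ih

theorem Chn.retarget {ε : ℝ} (h : Chn Φ δ T a b) (hbc : dist b c ≤ ε) :
    Chn Φ (δ + ε) T a c := by
  have hε : 0 ≤ ε := dist_nonneg.trans hbc
  induction h with
  | single a t b ht hd =>
      exact .single a t c ht (by
        calc dist (Φ a t) c ≤ dist (Φ a t) b + dist b c := dist_triangle _ _ _
        _ < δ + ε := by linarith)
  | cons a t d b ht hd h ih =>
      exact .cons a t d c ht (by linarith) (ih hbc)

theorem ChnB.monoδ (hδ : δ ≤ δ') (h : ChnB Φ δ T a b) : ChnB Φ δ' T a b := by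
  induction h with
  | single a t b ht ht2 hd => exact .single a t b ht ht2 (hd.trans_le hδ)
  | cons a t d b ht ht2 hd h ih => exact .cons a t d b ht ht2 (hd.trans_le hδ) ih

theorem ChnB.shiftStart {ε η : ℝ} {a' : M} (hT : 0 ≤ T)
    (hmod : ∀ p q : M, dist p q < η → ∀ t, T ≤ t → t ≤ 2*T → dist (Φ p t) (Φ q t) < ε)
    (h : ChnB Φ δ T a b) (ha : dist a' a < η) : ChnB Φ (δ + ε) T a' b := by
  have hε : 0 ≤ ε :=
    le_of_lt ((dist_nonneg).trans_lt (hmod a' a ha T le_rfl (by linarith)))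
  cases h with
  | single _ t b ht ht2 hd =>
      refine .single a' t b ht ht2 ?_
      calc dist (Φ a' t) b ≤ dist (Φ a' t) (Φ a t) + dist (Φ a t) b := dist_triangle _ _ _
      _ < ε + δ := by have := hmod a' a ha t ht ht2; linarith
      _ = δ + ε := by ring
  | cons _ t c b ht ht2 hd h =>
      refine .cons a' t c b ht ht2 ?_ (h.monoδ (by linarith))
      calc dist (Φ a' t) c ≤ dist (Φ a' t) (Φ a t) + dist (Φ a t) c := dist_triangle _ _ _
      _ < ε + δ := by have := hmod a' a ha t ht ht2; linarith
      _ = δ + ε := by ring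


theorem chnB_single_of_long (hadd : ∀ x s t, Φ x (s+t) = Φ (Φ x s) t)
    (hδ : 0 < δ) (hT : 0 < T) :
    ∀ (k : ℕ) (a : M) (t : ℝ) (c : M), T ≤ t → t ≤ (k+2)*T → dist (Φ a t) c < δ →
      ChnB Φ δ T a c := by
  intro k
  induction k with
  | zero =>
      intro a t c ht ht2 hd
      exact .single a t c ht (by push_cast at ht2; linarith) hd
  | succ k ih =>
      intro a t c ht ht2 hd
      by_cases h2 : t ≤ 2*T
      · exact .single a t c ht h2 hd
      · push_neg at h2
        refine .cons a T (Φ a T) c le_rfl (by linarith) (by simpa using hδ) ?_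
        refine ih (Φ a T) (t - T) c (by linarith) (by push_cast at ht2 ⊢; linarith) ?_
        have e : Φ (Φ a T) (t - T) = Φ a t := by
          rw [← hadd]; congr 1; ring
        rwa [e]

theorem Chn.toChnB (hadd : ∀ x s t, Φ x (s+t) = Φ (Φ x s) t)
    (hδ : 0 < δ) (hT : 0 < T) (h : Chn Φ δ T a b) : ChnB Φ δ T a b := by
  induction h with
  | single a t b ht hd =>
      obtain ⟨k, hk⟩ := exists_nat_ge (t / T)
      refine chnB_single_of_long hadd hδ hT k a t b ht ?_ hd
      have : t ≤ k * T := by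
        rw [div_le_iff₀ hT] at hk; nlinarith
      nlinarith
  | cons a t c b ht hd h ih =>
      obtain ⟨k, hk⟩ := exists_nat_ge (t / T)
      refine (chnB_single_of_long hadd hδ hT k a t c ht ?_ hd).trans ih
      have : t ≤ k * T := by
        rw [div_le_iff₀ hT] at hk; nlinarith
      nlinarith

/-- From the existential form of chains to `Chn`. -/
theorem chn_of_spec :
    ∀ (N : ℕ), 0 < N → ∀ (xs : ℕ → M) (ts : ℕ → ℝ),
      (∀ i < N, T ≤ ts i ∧ dist (Φ (xs i) (ts i)) (xs (i + 1)) < δ) →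
      Chn Φ δ T (xs 0) (xs N) := by
  intro N
  induction N with
  | zero => intro h; exact absurd h (lt_irrefl 0)
  | succ N ih =>
      intro _ xs ts hs
      rcases Nat.eq_zero_or_pos N with hN | hN
      · subst hN
        obtain ⟨h1, h2⟩ := hs 0 (by norm_num)
        exact .single (xs 0) (ts 0) (xs 1) h1 h2
      · obtain ⟨h1, h2⟩ := hs 0 (by omega)
        refine .cons (xs 0) (ts 0) (xs 1) (xs (N+1)) h1 h2 ?_
        have := ih hN (fun i => xs (i+1)) (fun i => ts (i+1))
          (fun i hi => hs (i+1) (by omega))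
        exact this

/-- From `Chn` to the existential form. -/
theorem Chn.spec (h : Chn Φ δ T a b) :
    ∃ (N : ℕ) (xs : ℕ → M) (ts : ℕ → ℝ), 0 < N ∧ xs 0 = a ∧ xs N = b ∧
      ∀ i < N, T ≤ ts i ∧ dist (Φ (xs i) (ts i)) (xs (i + 1)) < δ := by
  induction h with
  | single a t b ht hd =>
      refine ⟨1, fun i => if i = 0 then a else b, fun _ => t, one_pos, rfl, rfl, ?_⟩
      intro i hi
      interval_cases i
      simpa using ⟨ht, hd⟩
  | cons a t c b ht hd h ih =>
      obtain ⟨N, xs, ts, hN, h0, hNb, hs⟩ := ih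
      refine ⟨N+1, fun i => Nat.casesOn i a (fun j => xs j),
        fun i => Nat.casesOn i t (fun j => ts j), by omega, rfl, hNb, ?_⟩
      intro i hi
      cases i with
      | zero => simpa [h0] using ⟨ht, hd⟩
      | succ j => exact hs j (by omega)

theorem mem_chainRecurrentSet_iff {x : M} :
    x ∈ chainRecurrentSet Φ ↔ ∀ δ > (0:ℝ), ∀ T > (1:ℝ), Chn Φ δ T x x := by
  constructor
  · intro hx δ hδ T hT
    obtain ⟨N, xs, ts, hN, h0, hNx, hs⟩ := hx δ hδ T hT
    have := chn_of_spec N hN xs ts hs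
    rwa [h0, hNx] at this
  · intro h δ hδ T hT
    obtain ⟨N, xs, ts, hN, h0, hNx, hs⟩ := (h δ hδ T hT).spec
    exact ⟨N, xs, ts, hN, h0, hNx, hs⟩

end ChainMachinery
section Compact
variable {M : Type} [MetricSpace M] [CompactSpace M] {Φ : M → ℝ → M}

/-- uniform-continuity modulus for the flow over a compact time interval -/
theorem flow_modulus (hc : Continuous fun p : M × ℝ => Φ p.1 p.2)
    (c d : ℝ) {ε : ℝ} (hε : 0 < ε) :
    ∃ η > 0, ∀ p q : M, dist p q < η → ∀ t, t ∈ Icc c d →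
      dist (Φ p t) (Φ q t) < ε := by
  have hK : IsCompact ((univ : Set M) ×ˢ Icc c d) := isCompact_univ.prod isCompact_Icc
  have h1 := hK.uniformContinuousOn_of_continuous hc.continuousOn
  rw [uniformContinuousOn_iff] at h1
  obtain ⟨η, hη, h⟩ := h1 ε hε
  refine ⟨η, hη, fun p q hpq t ht => ?_⟩
  refine h (p, t) (by simp [ht]) (q, t) (by simp [ht]) ?_
  rw [Prod.dist_eq]
  simp only [dist_self]
  exact max_lt hpq hη

theorem no_chain_nbhd (hc : Continuous fun p : M × ℝ => Φ p.1 p.2)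
    (hadd : ∀ x s t, Φ x (s+t) = Φ (Φ x s) t)
    {y : M} (hy : y ∉ chainRecurrentSet Φ) :
    ∃ ρ > 0, ∃ δ' > 0, ∃ T' > (1:ℝ), ∀ z ∈ ball y ρ, ¬ Chn Φ δ' T' z z := by
  rw [mem_chainRecurrentSet_iff] at hy
  push_neg at hy
  obtain ⟨δ, hδ, T, hT, hno⟩ := hy
  obtain ⟨η, hη, hmod⟩ := flow_modulus hc T (2*T) (show (0:ℝ) < δ/3 by linarith)
  refine ⟨min η (δ/3), by positivity, δ/3, by linarith, T, hT, ?_⟩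
  intro z hz hchain
  apply hno
  have hT0 : (0:ℝ) < T := by linarith
  have hB : ChnB Φ (δ/3) T z z := hchain.toChnB hadd (by linarith) hT0
  have h2 : ChnB Φ (δ/3 + δ/3) T y z := by
    refine hB.shiftStart (le_of_lt hT0) (η := η) ?_ ?_
    · intro p q hpq t ht ht2; exact hmod p q hpq t ⟨ht, ht2⟩
    · exact (mem_ball'.mp hz).trans_le (min_le_left _ _)
  have h3 : Chn Φ (δ/3 + δ/3 + δ/3) T y y := by
    refine h2.toChn.retarget (le_of_lt ?_)
    exact (mem_ball.mp hz).trans_le (min_le_right _ _)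
  exact h3.mono (by linarith) le_rfl

theorem isClosed_chainRecurrentSet (hc : Continuous fun p : M × ℝ => Φ p.1 p.2)
    (hadd : ∀ x s t, Φ x (s+t) = Φ (Φ x s) t) :
    IsClosed (chainRecurrentSet Φ) := by
  rw [← isOpen_compl_iff, isOpen_iff_forall_mem_open]
  intro y hy
  obtain ⟨ρ, hρ, δ', hδ', T', hT', hno⟩ := no_chain_nbhd hc hadd hy
  refine ⟨ball y ρ, ?_, isOpen_ball, mem_ball_self hρ⟩
  intro z hz hzR
  exact hno z hz (mem_chainRecurrentSet_iff.mp hzR δ' hδ' T' hT')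

theorem exists_scale (hc : Continuous fun p : M × ℝ => Φ p.1 p.2)
    (hadd : ∀ x s t, Φ x (s+t) = Φ (Φ x s) t)
    {U : Set M} (hU : IsOpen U) (hRU : chainRecurrentSet Φ ⊆ U) :
    ∃ δ₀ > 0, ∃ T₀ > (1:ℝ), ∀ y : M, Chn Φ δ₀ T₀ y y → y ∈ U := by
  have hKc : IsCompact Uᶜ := hU.isClosed_compl.isCompact
  have key : ∀ y : ↥(Uᶜ), ∃ ρ > 0, ∃ δ' > 0, ∃ T' > (1:ℝ),
      ∀ z ∈ ball (y : M) ρ, ¬ Chn Φ δ' T' z z := by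
    intro y
    exact no_chain_nbhd hc hadd (fun h => y.2 (hRU h))
  choose ρ hρ δf hδf Tf hTf hnof using key
  obtain ⟨s, hs⟩ := hKc.elim_finite_subcover (fun y : ↥(Uᶜ) => ball (y : M) (ρ y))
    (fun _ => isOpen_ball) (fun z hz => mem_iUnion.mpr ⟨⟨z, hz⟩, mem_ball_self (hρ _)⟩)
  rcases s.eq_empty_or_nonempty with hse | hse
  · refine ⟨1, one_pos, 2, one_lt_two, fun y _ => ?_⟩
    by_contra hyU
    have := hs hyU
    simp [hse] at this
  · refine ⟨s.inf' hse δf, ?_, max 2 (s.sup' hse Tf), ?_, ?_⟩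
    · obtain ⟨i, hi, hieq⟩ := s.exists_mem_eq_inf' hse δf
      rw [hieq]; exact hδf i
    · exact lt_of_lt_of_le one_lt_two (le_max_left _ _)
    · intro y hy
      by_contra hyU
      obtain ⟨i, hi, hyi⟩ := mem_iUnion₂.mp (hs hyU)
      refine hnof i _ hyi ?_
      refine hy.mono ?_ ?_
      · exact Finset.inf'_le _ hi
      · exact le_trans (Finset.le_sup' Tf hi) (le_max_right _ _)

end Compact
section Connected
variable {M : Type} [MetricSpace M] {Φ : M → ℝ → M}

/-- within a preconnected set of chain-recurrent points, chains at all scales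
connect any two points -/
theorem chn_of_preconnected {C : Set M} (hC : IsPreconnected C)
    (hCR : C ⊆ chainRecurrentSet Φ) {w w' : M} (hw : w ∈ C) (hw' : w' ∈ C)
    {δ T : ℝ} (hδ : 0 < δ) (hT : 1 < T) : Chn Φ δ T w w' := by
  set F := {z | z ∈ C ∧ Chn Φ δ T w z} with hF
  have hsat : ∀ f ∈ F, ∀ z ∈ C, dist f z < δ/2 → z ∈ F := by
    rintro f ⟨hfC, hfc⟩ z hzC hdist
    have hloop : Chn Φ (δ/2) T f f :=
      mem_chainRecurrentSet_iff.mp (hCR hfC) (δ/2) (by linarith) T hT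
    have : Chn Φ (δ/2 + δ/2) T f z := hloop.retarget (le_of_lt hdist)
    refine ⟨hzC, hfc.trans ?_⟩
    exact this.mono (by linarith) le_rfl
  by_contra hnot
  have hwF : w ∈ F :=
    ⟨hw, mem_chainRecurrentSet_iff.mp (hCR hw) δ hδ T hT⟩
  have hw'F : w' ∉ F := fun h => hnot h.2
  have hsub : C ⊆ (⋃ z ∈ F, ball z (δ/2)) ∪ (⋃ z ∈ C \ F, ball z (δ/2)) := by
    intro z hz
    by_cases hzF : z ∈ F
    · exact Or.inl (mem_biUnion hzF (mem_ball_self (by linarith)))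
    · exact Or.inr (mem_biUnion ⟨hz, hzF⟩ (mem_ball_self (by linarith)))
  obtain ⟨z, hzC, hz1, hz2⟩ := hC _ _
    (isOpen_biUnion (fun _ _ => isOpen_ball))
    (isOpen_biUnion (fun _ _ => isOpen_ball)) hsub
    ⟨w, hw, mem_biUnion hwF (mem_ball_self (by linarith))⟩
    ⟨w', hw', mem_biUnion ⟨hw', hw'F⟩ (mem_ball_self (by linarith))⟩
  obtain ⟨f, hfF, hzf⟩ := mem_iUnion₂.mp hz1
  obtain ⟨g, hgCF, hzg⟩ := mem_iUnion₂.mp hz2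
  have hzF : z ∈ F := hsat f hfF z hzC (by rw [dist_comm]; exact mem_ball.mp hzf)
  have : g ∈ F := hsat z hzF g hgCF.1 (mem_ball.mp hzg)
  exact hgCF.2 this

end Connected

section Omega
variable {M : Type} [MetricSpace M] [CompactSpace M] (Φ : M → ℝ → M)

/-- the ω-limit set of the trajectory of `x` -/
def omegaSet (x : M) : Set M :=
  {y | ∃ u : ℕ → ℝ, Tendsto u atTop atTop ∧
    Tendsto (fun m => Φ x (u m)) atTop (nhds y)}

variable {Φ}

theorem omega_cluster (x : M) {u : ℕ → ℝ} (hu : Tendsto u atTop atTop) :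
    ∃ y ∈ omegaSet Φ x, ∃ φ : ℕ → ℕ, StrictMono φ ∧
      Tendsto (fun m => Φ x (u (φ m))) atTop (nhds y) := by
  obtain ⟨y, -, φ, hφ, hlim⟩ :=
    isCompact_univ.tendsto_subseq (x := fun m => Φ x (u m)) (fun m => mem_univ _)
  exact ⟨y, ⟨u ∘ φ, hu.comp hφ.tendsto_atTop, hlim⟩, φ, hφ, hlim⟩

theorem omegaSet_nonempty (x : M) : (omegaSet Φ x).Nonempty := by
  obtain ⟨y, hy, -⟩ := omega_cluster (Φ := Φ) x
    (u := fun m => (m : ℝ)) tendsto_natCast_atTop_atTop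
  exact ⟨y, hy⟩

theorem omegaSet_subset_chainRecurrentSet
    (hc : Continuous fun p : M × ℝ => Φ p.1 p.2)
    (hadd : ∀ x s t, Φ x (s+t) = Φ (Φ x s) t) (x : M) :
    omegaSet Φ x ⊆ chainRecurrentSet Φ := by
  rintro y ⟨u, huT, huy⟩
  rw [mem_chainRecurrentSet_iff]
  intro δ hδ T hT
  obtain ⟨η, hη, hmod⟩ := flow_modulus hc T (2*T) (show (0:ℝ) < δ/3 by linarith)
  have hev1 : ∀ᶠ m in atTop, dist (Φ x (u m)) y < min η (δ/3) :=
    (Metric.tendsto_nhds.mp huy) _ (by positivity)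
  obtain ⟨m, hm⟩ := hev1.exists
  have hev2 : ∀ᶠ k in atTop, u k ≥ u m + 2*T ∧ dist (Φ x (u k)) y < δ/3 :=
    (huT.eventually_ge_atTop (u m + 2*T)).and
      ((Metric.tendsto_nhds.mp huy) _ (by linarith))
  obtain ⟨k, hk1, hk2⟩ := hev2.exists
  refine Chn.cons y T (Φ x (u m + T)) y le_rfl ?_ ?_
  · have e : Φ x (u m + T) = Φ (Φ x (u m)) T := hadd x (u m) T
    rw [e, show dist (Φ y T) (Φ (Φ x (u m)) T) = dist (Φ y T) (Φ (Φ x (u m)) T) from rfl]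
    have : dist y (Φ x (u m)) < η := by
      rw [dist_comm]; exact hm.trans_le (min_le_left _ _)
    have := hmod y (Φ x (u m)) this T ⟨le_rfl, by linarith⟩
    linarith
  · refine Chn.single _ (u k - u m - T) y (by linarith) ?_
    have e : Φ (Φ x (u m + T)) (u k - u m - T) = Φ x (u k) := by
      rw [← hadd]; congr 1; ring
    rw [e]
    linarith [hk2, min_le_right η (δ/3)]

theorem eventually_mem_of_omega_subset (x : M) {N : Set M} (hN : IsOpen N)
    (hsub : omegaSet Φ x ⊆ N) : ∃ T : ℝ, ∀ t ≥ T, Φ x t ∈ N := by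
  by_contra h
  push_neg at h
  choose u hu1 hu2 using h
  have huT : Tendsto (fun m : ℕ => u m) atTop atTop :=
    tendsto_atTop_mono (fun m => hu1 m) tendsto_natCast_atTop_atTop
  obtain ⟨y, hyω, φ, hφ, hlim⟩ := omega_cluster x huT
  have : y ∈ Nᶜ := by
    refine hN.isClosed_compl.mem_of_tendsto hlim ?_
    exact Eventually.of_forall (fun m => hu2 (φ m))
  exact this (hsub hyω)

end Omega

section Tube
variable {M : Type} [MetricSpace M] {Φ : M → ℝ → M}

theorem isOpen_tube (hc : Continuous fun p : M × ℝ => Φ p.1 p.2)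
    {N : Set M} (hN : IsOpen N) (c d : ℝ) :
    IsOpen {x : M | ∀ t ∈ Icc c d, Φ x t ∈ N} := by
  rw [isOpen_iff_forall_mem_open]
  intro x₀ hx₀
  have hS : IsOpen {p : M × ℝ | Φ p.1 p.2 ∈ N} := hN.preimage hc
  have hsub : ({x₀} : Set M) ×ˢ Icc c d ⊆ {p : M × ℝ | Φ p.1 p.2 ∈ N} := by
    rintro ⟨z, t⟩ ⟨hz, ht⟩
    rcases hz with rfl
    exact hx₀ t ht
  obtain ⟨U, V, hU, hV, hxU, hIV, hUV⟩ :=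
    generalized_tube_lemma isCompact_singleton isCompact_Icc hS hsub
  refine ⟨U, ?_, hU, hxU rfl⟩
  intro z hz t ht
  exact hUV (Set.mk_mem_prod hz (hIV ht))

end Tube
section Trapped
variable {M : Type} [MetricSpace M] [CompactSpace M] {Φ : M → ℝ → M}

theorem omega_trapped (hc : Continuous fun p : M × ℝ => Φ p.1 p.2)
    (hadd : ∀ x s t, Φ x (s+t) = Φ (Φ x s) t)
    {r : ℕ} (O : Fin r → Set M) (hO : ∀ i, IsOpen (O i))
    (hdisj : ∀ i j, i ≠ j → ∀ z, z ∈ O i → z ∈ O j → False)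
    (hRsub : chainRecurrentSet Φ ⊆ ⋃ i, O i) (x : M) :
    ∃ l, omegaSet Φ x ⊆ O l := by
  obtain ⟨p, hp⟩ := omegaSet_nonempty (Φ := Φ) x
  obtain ⟨l, hpl⟩ := mem_iUnion.mp
    (hRsub (omegaSet_subset_chainRecurrentSet hc hadd x hp))
  refine ⟨l, ?_⟩
  by_contra hnot
  rw [not_subset] at hnot
  obtain ⟨q, hq, hql⟩ := hnot
  obtain ⟨l', hql'⟩ := mem_iUnion.mp
    (hRsub (omegaSet_subset_chainRecurrentSet hc hadd x hq))
  have hll' : l ≠ l' := fun h => hql (h ▸ hql')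
  obtain ⟨up, hupT, hupy⟩ := hp
  obtain ⟨uq, huqT, huqy⟩ := hq
  have hVopen : IsOpen (⋃ (i) (_ : i ≠ l), O i) :=
    isOpen_iUnion (fun i => isOpen_iUnion (fun _ => hO i))
  have hVdisj : Disjoint (O l) (⋃ (i) (_ : i ≠ l), O i) := by
    rw [Set.disjoint_left]
    intro z hz hz'
    obtain ⟨i, hi, hzi⟩ := mem_iUnion₂.mp hz'
    exact hdisj l i (Ne.symm hi) z hz hzi
  have key : ∀ m : ℕ, ∃ τ ≥ (m:ℝ), Φ x τ ∉ ⋃ i, O i := by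
    intro m
    obtain ⟨k, hk1, hk2⟩ := ((hupT.eventually_ge_atTop (m:ℝ)).and
      (hupy.eventually ((hO l).mem_nhds hpl))).exists
    obtain ⟨j, hj1, hj2⟩ := ((huqT.eventually_ge_atTop (up k)).and
      (huqy.eventually ((hO l').mem_nhds hql'))).exists
    set a := up k
    set b := uq j
    have hcont : ContinuousOn (fun t => Φ x t) (Icc a b) :=
      (hc.comp (continuous_const.prodMk continuous_id)).continuousOn
    by_contra hno
    push_neg at hno
    have himg : (fun t => Φ x t) '' Icc a b ⊆ O l ∪ ⋃ (i) (_ : i ≠ l), O i := by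
      rintro - ⟨t, ht, rfl⟩
      have := hno t (le_trans hk1 ht.1)
      obtain ⟨i, hi⟩ := mem_iUnion.mp this
      by_cases hil : i = l
      · exact Or.inl (hil ▸ hi)
      · exact Or.inr (mem_iUnion₂.mpr ⟨i, hil, hi⟩)
    have hsubl : (fun t => Φ x t) '' Icc a b ⊆ O l := by
      refine IsPreconnected.subset_left_of_subset_union (hO l) hVopen hVdisj himg
        ⟨Φ x a, ⟨a, ⟨le_rfl, hj1⟩, rfl⟩, hk2⟩ (isPreconnected_Icc.image _ hcont)
    have : Φ x b ∈ O l := hsubl ⟨b, ⟨hj1, le_rfl⟩, rfl⟩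
    exact hdisj l l' hll' _ this hj2
  choose τs hτ1 hτ2 using key
  have hτT : Tendsto τs atTop atTop :=
    tendsto_atTop_mono hτ1 tendsto_natCast_atTop_atTop
  obtain ⟨y, hyω, φ, hφ, hlim⟩ := omega_cluster x hτT
  have hyc : y ∈ (⋃ i, O i)ᶜ := by
    refine (isOpen_iUnion hO).isClosed_compl.mem_of_tendsto hlim ?_
    exact Eventually.of_forall (fun m => hτ2 (φ m))
  exact hyc (hRsub (omegaSet_subset_chainRecurrentSet hc hadd x hyω))

end Trapped

section Cat
variable {X : Type} [TopologicalSpace X]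

theorem CatLE.mono {A B : Set X} {k : ℕ} (h : CatLE X A k) (hBA : B ⊆ A) :
    CatLE X B k := by
  obtain ⟨V, h1, h2, h3⟩ := h
  exact ⟨V, h1, hBA.trans h2, h3⟩

theorem catLE_empty : CatLE X (∅ : Set X) 0 :=
  ⟨Fin.elim0, fun i => i.elim0, by simp, fun i => i.elim0⟩

theorem CatLE.union {A B : Set X} {a b : ℕ} (hA : CatLE X A a) (hB : CatLE X B b) :
    CatLE X (A ∪ B) (a + b) := by
  obtain ⟨VA, hA1, hA2, hA3⟩ := hA
  obtain ⟨VB, hB1, hB2, hB3⟩ := hB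
  refine ⟨fun i => Sum.elim VA VB (finSumFinEquiv.symm i), ?_, ?_, ?_⟩
  · intro i
    cases hji : finSumFinEquiv.symm i with
    | inl j => simp only [hji, Sum.elim_inl]; exact hA1 j
    | inr j => simp only [hji, Sum.elim_inr]; exact hB1 j
  · rintro z (hz | hz)
    · obtain ⟨j, hj⟩ := mem_iUnion.mp (hA2 hz)
      refine mem_iUnion.mpr ⟨finSumFinEquiv (Sum.inl j), ?_⟩
      simpa using hj
    · obtain ⟨j, hj⟩ := mem_iUnion.mp (hB2 hz)
      refine mem_iUnion.mpr ⟨finSumFinEquiv (Sum.inr j), ?_⟩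
      simpa using hj
  · intro i
    cases hji : finSumFinEquiv.symm i with
    | inl j => simp only [hji, Sum.elim_inl]; exact hA3 j
    | inr j => simp only [hji, Sum.elim_inr]; exact hB3 j

end Cat
section Chart

theorem exists_nullhomotopic_nbhd (n : ℕ) {M : Type} [MetricSpace M]
    [ChartedSpace (EuclideanSpace ℝ (Fin n)) M] (x : M) :
    ∃ U : Set M, IsOpen U ∧ x ∈ U ∧ NullhomotopicIn M U := by
  set e := chartAt (EuclideanSpace ℝ (Fin n)) x with he
  have hx : x ∈ e.source := mem_chart_source _ x
  have hxt : e x ∈ e.target := e.map_source hx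
  obtain ⟨ε, hε, hball⟩ := Metric.isOpen_iff.mp e.open_target _ hxt
  set U := e.source ∩ e ⁻¹' ball (e x) ε with hU
  have hUopen : IsOpen U :=
    e.continuousOn.isOpen_inter_preimage e.open_source isOpen_ball
  have hmaps : ∀ p : M × ℝ, p ∈ U ×ˢ Icc (0:ℝ) 1 →
      (1 - p.2) • e p.1 + p.2 • e x ∈ ball (e x) ε := by
    rintro ⟨z, t⟩ ⟨⟨hz1, hz2⟩, ht⟩
    have hzb : dist (e z) (e x) < ε := by simpa [mem_ball] using hz2
    rw [mem_ball, dist_eq_norm]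
    have : (1 - t) • e z + t • e x - e x = (1 - t) • (e z - e x) := by
      module
    rw [this, norm_smul]
    have h1 : |1 - t| ≤ 1 := by
      rw [abs_le]; constructor <;> [linarith [ht.2]; linarith [ht.1]]
    calc ‖(1 - t)‖ * ‖e z - e x‖ ≤ 1 * ‖e z - e x‖ := by
          apply mul_le_mul_of_nonneg_right _ (norm_nonneg _)
          simpa using h1
    _ = ‖e z - e x‖ := one_mul _
    _ < ε := by rwa [← dist_eq_norm]
  refine ⟨U, hUopen, ⟨hx, by simp [mem_ball, hε]⟩,
    fun p => e.symm ((1 - p.2) • e p.1 + p.2 • e x), x, ?_, ?_, ?_⟩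
  · have hinner : ContinuousOn (fun p : M × ℝ => (1 - p.2) • e p.1 + p.2 • e x)
        (U ×ˢ Icc (0:ℝ) 1) := by
      have h1 : ContinuousOn (fun p : M × ℝ => e p.1) (U ×ˢ Icc (0:ℝ) 1) := by
        refine e.continuousOn.comp continuous_fst.continuousOn ?_
        rintro ⟨z, t⟩ ⟨hz, -⟩
        exact hz.1
      exact ((continuousOn_const.sub continuous_snd.continuousOn).smul h1).add
        (continuous_snd.continuousOn.smul continuousOn_const)
    refine e.symm.continuousOn.comp hinner ?_
    intro p hp
    exact hball (hmaps p hp)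
  · rintro z ⟨hz1, -⟩
    simp only [sub_zero, one_smul, zero_smul, add_zero]
    exact e.left_inv hz1
  · rintro z ⟨hz1, -⟩
    simp only [sub_self, zero_smul, one_smul, zero_add]
    exact e.left_inv hx

theorem exists_catLE_univ (n : ℕ) {M : Type} [MetricSpace M]
    [ChartedSpace (EuclideanSpace ℝ (Fin n)) M] [CompactSpace M] :
    ∃ k : ℕ, CatLE M (univ : Set M) k := by
  have key := fun x : M => exists_nullhomotopic_nbhd n x
  choose Uf hUo hUx hUn using key
  obtain ⟨s, hs⟩ := isCompact_univ.elim_finite_subcover Uf hUo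
    (fun z _ => mem_iUnion.mpr ⟨z, hUx z⟩)
  refine ⟨s.card, fun i => Uf (s.equivFin.symm i), fun i => hUo _, ?_, fun i => hUn _⟩
  intro z hz
  obtain ⟨y, hys, hzy⟩ := mem_iUnion₂.mp (hs (mem_univ z))
  refine mem_iUnion.mpr ⟨s.equivFin ⟨y, hys⟩, ?_⟩
  simpa using hzy

end Chart
theorem isClosed_connectedComponentIn {α : Type} [TopologicalSpace α]
    {F : Set α} (hF : IsClosed F) (x : α) :
    IsClosed (connectedComponentIn F x) := by
  by_cases hx : x ∈ F
  · rw [connectedComponentIn_eq_image hx]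
    exact (hF.isClosedEmbedding_subtypeVal.isClosedMap) _ isClosed_connectedComponent
  · rw [connectedComponentIn, dif_neg hx]
    exact isClosed_empty

section Segment
variable {M : Type} [MetricSpace M] [CompactSpace M] {Φ : M → ℝ → M}

/-- Key no-gap lemma: between two long stays in a small neighbourhood `N` of a
piece `C` of the chain recurrent set, the orbit remains in `O l`. -/
theorem segment_trapped
    (hc : Continuous fun p : M × ℝ => Φ p.1 p.2)
    (hadd : ∀ x s t, Φ x (s+t) = Φ (Φ x s) t)
    {δ₀ T₀ : ℝ} (hδ₀ : 0 < δ₀) (hT₀ : 1 < T₀)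
    {r : ℕ} {O : Fin r → Set M} (hOopen : ∀ i, IsOpen (O i))
    (hdisj : ∀ i j, i ≠ j → ∀ z, z ∈ O i → z ∈ O j → False)
    (hscale : ∀ y : M, Chn Φ δ₀ T₀ y y → y ∈ ⋃ i, O i)
    {l : Fin r} {C : Set M} (hCconn : IsPreconnected C)
    (hCR : C ⊆ chainRecurrentSet Φ)
    {N : Set M} (hNO : N ⊆ O l) (hNnear : ∀ z ∈ N, ∃ w ∈ C, dist z w < δ₀/4)
    {L : ℝ} (hT₀L : T₀ ≤ L)
    {x : M} {a b : ℝ} (hab : a ≤ b)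
    (ha : ∀ t ∈ Icc a (a + 2*L), Φ x t ∈ N)
    (hb : ∀ t ∈ Icc b (b + 2*L), Φ x t ∈ N) :
    ∀ t ∈ Icc a (b + 2*L), Φ x t ∈ O l := by
  have hT₀0 : (0:ℝ) < T₀ := by linarith
  have hL0 : (0:ℝ) < L := by linarith
  -- step 1: every point of the segment is in some O i
  have hstep : ∀ t ∈ Icc a (b + 2*L), Φ x t ∈ ⋃ i, O i := by
    intro t ht
    by_cases h1 : t ≤ a + 2*L
    · exact mem_iUnion.mpr ⟨l, hNO (ha t ⟨ht.1, h1⟩)⟩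
    by_cases h2 : b ≤ t
    · exact mem_iUnion.mpr ⟨l, hNO (hb t ⟨h2, ht.2⟩)⟩
    push_neg at h1 h2
    by_cases hyN : Φ x t ∈ N
    · exact mem_iUnion.mpr ⟨l, hNO hyN⟩
    set y := Φ x t with hy
    -- build a (δ₀, T₀)-chain from y to itself
    have hqb : Φ x (b + T₀) ∈ N := hb _ ⟨by linarith, by linarith⟩
    obtain ⟨wb, hwbC, hwbd⟩ := hNnear _ hqb
    have hp : Φ x (a + 2*L - T₀) ∈ N := ha _ ⟨by linarith, by linarith⟩
    obtain ⟨wa, hwaC, hwad⟩ := hNnear _ hp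
    have hchain : Chn Φ δ₀ T₀ y y := by
      have e1 : Φ y (b + T₀ - t) = Φ x (b + T₀) := by
        rw [hy, ← hadd]; congr 1; ring
      refine Chn.cons y (b + T₀ - t) wb y (by linarith) ?_ ?_
      · rw [e1]; linarith
      · -- from wb through C to wa, retargeted to p, then flow back to y
        have hmid : Chn Φ (δ₀/4) T₀ wb wa :=
          chn_of_preconnected hCconn hCR hwbC hwaC (by linarith) hT₀
        have hloop : Chn Φ (δ₀/4) T₀ wa wa :=
          mem_chainRecurrentSet_iff.mp (hCR hwaC) (δ₀/4) (by linarith) T₀ hT₀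
        have hre : Chn Φ (δ₀/4 + δ₀/4) T₀ wa (Φ x (a + 2*L - T₀)) :=
          hloop.retarget (by rw [dist_comm]; linarith)
        have hlast : Chn Φ δ₀ T₀ (Φ x (a + 2*L - T₀)) y := by
          refine Chn.single _ (t - (a + 2*L - T₀)) y (by linarith) ?_
          have e2 : Φ (Φ x (a + 2*L - T₀)) (t - (a + 2*L - T₀)) = Φ x t := by
            rw [← hadd]; congr 1; ring
          rw [e2, hy, dist_self]; exact hδ₀
        exact (((hmid.mono (by linarith) le_rfl).trans hre).mono (by linarith) le_rfl).trans hlast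
    exact hscale y hchain
  -- step 2: connectivity pins the segment in O l
  have hVopen : IsOpen (⋃ (i) (_ : i ≠ l), O i) :=
    isOpen_iUnion (fun i => isOpen_iUnion (fun _ => hOopen i))
  have hVdisj : Disjoint (O l) (⋃ (i) (_ : i ≠ l), O i) := by
    rw [Set.disjoint_left]
    intro z hz hz'
    obtain ⟨i, hi, hzi⟩ := mem_iUnion₂.mp hz'
    exact hdisj l i (Ne.symm hi) z hz hzi
  have hcont : ContinuousOn (fun t => Φ x t) (Icc a (b + 2*L)) :=
    (hc.comp (continuous_const.prodMk continuous_id)).continuousOn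
  have himg : (fun t => Φ x t) '' Icc a (b + 2*L) ⊆ O l ∪ ⋃ (i) (_ : i ≠ l), O i := by
    rintro - ⟨t, ht, rfl⟩
    obtain ⟨i, hi⟩ := mem_iUnion.mp (hstep t ht)
    by_cases hil : i = l
    · exact Or.inl (hil ▸ hi)
    · exact Or.inr (mem_iUnion₂.mpr ⟨i, hil, hi⟩)
  have hsubl : (fun t => Φ x t) '' Icc a (b + 2*L) ⊆ O l := by
    refine IsPreconnected.subset_left_of_subset_union (hOopen l) hVopen hVdisj himg
      ⟨Φ x a, ⟨a, ⟨le_rfl, by linarith⟩, rfl⟩, hNO (ha a ⟨le_rfl, by linarith⟩)⟩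
      (isPreconnected_Icc.image _ hcont)
  intro t ht
  exact hsubl ⟨t, ht, rfl⟩

end Segment
section Theta
variable {M : Type} [MetricSpace M]

open Classical in
/-- A continuous "window selection" function on the union of a countable family
of open sets, whose value at `x` is sandwiched between `m*L` and `m'*L` for
indices `m ≤ m'` of windows containing `x`. -/
theorem exists_theta (G : ℕ → Set M) (hG : ∀ m, IsOpen (G m))
    (L : ℝ) (hL : 0 < L) :
    ∃ θ : M → ℝ, ContinuousOn θ (⋃ m, G m) ∧
      ∀ x ∈ ⋃ m, G m, ∃ m m' : ℕ, x ∈ G m ∧ x ∈ G m' ∧ m ≤ m' ∧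
        (m:ℝ)*L ≤ θ x ∧ θ x ≤ (m':ℝ)*L := by
  -- weights
  set s : ℕ → M → ℝ := fun m x =>
    if h : (G m)ᶜ.Nonempty then min (infDist x (G m)ᶜ) 1 else 1 with hs
  have hscont : ∀ m, Continuous (s m) := by
    intro m
    by_cases h : (G m)ᶜ.Nonempty
    · simp only [hs, dif_pos h]
      exact (continuous_infDist_pt _).min continuous_const
    · simp only [hs, dif_neg h]
      exact continuous_const
  have hsnonneg : ∀ m x, 0 ≤ s m x := by
    intro m x
    by_cases h : (G m)ᶜ.Nonempty
    · simp only [hs, dif_pos h]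
      exact le_min infDist_nonneg zero_le_one
    · simp only [hs, dif_neg h]; norm_num
  have hsle : ∀ m x, s m x ≤ 1 := by
    intro m x
    by_cases h : (G m)ᶜ.Nonempty
    · simp only [hs, dif_pos h]; exact min_le_right _ _
    · simp only [hs, dif_neg h]; exact le_rfl
  have hspos : ∀ m x, x ∈ G m → 0 < s m x := by
    intro m x hx
    by_cases h : (G m)ᶜ.Nonempty
    · simp only [hs, dif_pos h]
      refine lt_min ?_ zero_lt_one
      exact ((hG m).isClosed_compl.notMem_iff_infDist_pos h).mp (fun hc => hc hx)
    · simp only [hs, dif_neg h]; norm_num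
  have hszero : ∀ m x, x ∉ G m → s m x = 0 := by
    intro m x hx
    by_cases h : (G m)ᶜ.Nonempty
    · simp only [hs, dif_pos h]
      have h0 : infDist x (G m)ᶜ = 0 := infDist_zero_of_mem hx
      rw [h0]
      simp
    · exact absurd ⟨x, hx⟩ h
  set w : ℕ → M → ℝ := fun m x => (1/2)^m * s m x with hw
  have hwnonneg : ∀ m x, 0 ≤ w m x := fun m x => by
    exact mul_nonneg (by positivity) (hsnonneg m x)
  have hwle : ∀ m x, w m x ≤ (1/2)^m := by
    intro m x
    have : ((1:ℝ)/2)^m * s m x ≤ (1/2)^m * 1 :=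
      mul_le_mul_of_nonneg_left (hsle m x) (by positivity)
    simpa [hw] using this
  have hgeom : Summable (fun m : ℕ => ((1:ℝ)/2)^m) :=
    summable_geometric_of_lt_one (by norm_num) (by norm_num)
  have hsumw : ∀ x, Summable (fun m => w m x) := fun x =>
    Summable.of_nonneg_of_le (fun m => hwnonneg m x) (fun m => hwle m x) hgeom
  have hbig : Summable (fun m : ℕ => ((m:ℝ)*L) * (1/2)^m) := by
    have h1 : Summable (fun m : ℕ => (m:ℝ)^1 * (1/2)^m) :=
      summable_pow_mul_geometric_of_norm_lt_one 1
        (by rw [Real.norm_eq_abs, abs_of_pos] <;> norm_num)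
    have := h1.mul_left L
    refine this.congr (fun m => ?_)
    push_cast; ring
  have hsumn : ∀ x, Summable (fun m : ℕ => ((m:ℝ)*L) * w m x) := by
    intro x
    refine Summable.of_nonneg_of_le (fun m => ?_) (fun m => ?_) hbig
    · exact mul_nonneg (by positivity) (hwnonneg m x)
    · exact mul_le_mul_of_nonneg_left (hwle m x) (by positivity)
  set den : M → ℝ := fun x => ∑' (m : ℕ), w m x with hden
  set num : M → ℝ := fun x => ∑' (m : ℕ), ((m:ℝ)*L) * w m x with hnum
  have hdencont : Continuous den := by
    refine continuous_tsum (fun m => ((continuous_const).mul (hscont m))) hgeom ?_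
    intro m x
    rw [Real.norm_eq_abs, abs_of_nonneg (hwnonneg m x)]
    exact hwle m x
  have hnumcont : Continuous num := by
    refine continuous_tsum
      (fun m => ((continuous_const).mul ((continuous_const).mul (hscont m)))) hbig ?_
    intro m x
    rw [Real.norm_eq_abs, abs_of_nonneg (mul_nonneg (by positivity) (hwnonneg m x))]
    exact mul_le_mul_of_nonneg_left (hwle m x) (by positivity)
  have hdenpos : ∀ x ∈ ⋃ m, G m, 0 < den x := by
    intro x hx
    obtain ⟨m, hm⟩ := mem_iUnion.mp hx
    exact Summable.tsum_pos (hsumw x) (fun m => hwnonneg m x) m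
      (mul_pos (by positivity) (hspos m x hm))
  refine ⟨fun x => num x / den x, ?_, ?_⟩
  · exact ContinuousOn.div hnumcont.continuousOn hdencont.continuousOn
      (fun x hx => ne_of_gt (hdenpos x hx))
  · intro x hx
    have hex : ∃ m, x ∈ G m := mem_iUnion.mp hx
    set m₀ := Nat.find hex with hm₀
    have hm₀G : x ∈ G m₀ := Nat.find_spec hex
    have hlow : (m₀:ℝ)*L ≤ num x / den x := by
      rw [le_div_iff₀ (hdenpos x hx)]
      calc (m₀:ℝ)*L * den x = ∑' (m : ℕ), ((m₀:ℝ)*L) * w m x := by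
            rw [hden, ← tsum_mul_left]
      _ ≤ ∑' (m : ℕ), ((m:ℝ)*L) * w m x := by
            refine Summable.tsum_le_tsum (fun m => ?_) ((hsumw x).mul_left _) (hsumn x)
            rcases eq_or_lt_of_le (hwnonneg m x) with h0 | hpos
            · rw [← h0]; simp
            · have hmG : x ∈ G m := by
                by_contra hmem
                rw [hw] at hpos
                simp [hszero m x hmem] at hpos
              have : m₀ ≤ m := Nat.find_min' hex hmG
              have h2 : (m₀:ℝ) ≤ m := by exact_mod_cast this
              exact mul_le_mul_of_nonneg_right
                (mul_le_mul_of_nonneg_right h2 hL.le) (hwnonneg m x)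
      _ = num x := rfl
    -- upper bound
    have hup : ∃ m', x ∈ G m' ∧ num x / den x ≤ (m':ℝ)*L := by
      by_contra hno
      push_neg at hno
      have hbound : ∀ m, x ∈ G m → (m:ℝ)*L < num x / den x := fun m hm => hno m hm
      set bnd : ℕ := Nat.ceil (num x / den x / L) with hbnd
      have hvalid_le : ∀ m, x ∈ G m → m ≤ bnd := by
        intro m hm
        have h1 : (m:ℝ) < num x / den x / L := by
          rw [lt_div_iff₀ hL]; exact hbound m hm
        exact_mod_cast (Nat.le_ceil _).trans' h1.le
      set F := (Finset.range (bnd+1)).filter (fun m => x ∈ G m) with hF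
      have hFne : F.Nonempty :=
        ⟨m₀, Finset.mem_filter.mpr ⟨Finset.mem_range.mpr (by
          have := hvalid_le m₀ hm₀G; omega), hm₀G⟩⟩
      set mx := F.max' hFne with hmx
      have hmxG : x ∈ G mx := (Finset.mem_filter.mp (F.max'_mem hFne)).2
      have hallle : ∀ m, x ∈ G m → m ≤ mx := by
        intro m hm
        refine F.le_max' m (Finset.mem_filter.mpr ⟨Finset.mem_range.mpr ?_, hm⟩)
        have := hvalid_le m hm; omega
      have hupper : num x / den x ≤ (mx:ℝ)*L := by
        rw [div_le_iff₀ (hdenpos x hx)]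
        calc num x = ∑' (m : ℕ), ((m:ℝ)*L) * w m x := rfl
        _ ≤ ∑' (m : ℕ), ((mx:ℝ)*L) * w m x := by
              refine Summable.tsum_le_tsum (fun m => ?_) (hsumn x) ((hsumw x).mul_left _)
              rcases eq_or_lt_of_le (hwnonneg m x) with h0 | hpos
              · rw [← h0]; simp
              · have hmG : x ∈ G m := by
                  by_contra hmem
                  rw [hw] at hpos
                  simp [hszero m x hmem] at hpos
                have : m ≤ mx := hallle m hmG
                have h2 : (m:ℝ) ≤ mx := by exact_mod_cast this
                exact mul_le_mul_of_nonneg_right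
                  (mul_le_mul_of_nonneg_right h2 hL.le) (hwnonneg m x)
        _ = (mx:ℝ)*L * den x := by rw [hden, ← tsum_mul_left]
      exact absurd hupper (not_le.mpr (hbound mx hmxG))
    obtain ⟨m', hm'G, hm'⟩ := hup
    refine ⟨m₀, m', hm₀G, hm'G, ?_, hlow, hm'⟩
    -- m₀ ≤ m'
    exact Nat.find_min' hex hm'G

end Theta
section Nullhomotopy
variable {M : Type} [MetricSpace M] {Φ : M → ℝ → M}

open Classical in
theorem nullhomotopic_of_flow_into
    (hc : Continuous fun p : M × ℝ => Φ p.1 p.2) (h0 : ∀ x, Φ x 0 = x)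
    {A B' : Set M} {θ : M → ℝ} (hAB : A ⊆ B') (hθ : ContinuousOn θ B')
    {V : Set M} (hV : NullhomotopicIn M V)
    (hmaps : ∀ x ∈ A, Φ x (θ x) ∈ V) :
    NullhomotopicIn M A := by
  obtain ⟨HV, x₀, hH1, hH2, hH3⟩ := hV
  set t : Set (M × ℝ) := {p | p.2 ≤ 1/2} with ht
  set f : M × ℝ → M := fun p => Φ p.1 (2*p.2*θ p.1) with hf
  set g : M × ℝ → M := fun p => HV (Φ p.1 (θ p.1), 2*p.2 - 1) with hg
  set s : Set (M × ℝ) := A ×ˢ Icc (0:ℝ) 1 with hsdef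
  have htc : IsClosed t := isClosed_le continuous_snd continuous_const
  have htcompl : closure tᶜ ⊆ {p : M × ℝ | 1/2 ≤ p.2} := by
    have : tᶜ = {p : M × ℝ | 1/2 < p.2} := by
      ext p; simp [ht, not_le]
    rw [this]
    exact closure_lt_subset_le continuous_const continuous_snd
  have hθfst : ContinuousOn (fun p : M × ℝ => θ p.1) s :=
    hθ.comp continuous_fst.continuousOn (fun p hp => hAB hp.1)
  have hin1 : ContinuousOn (fun p : M × ℝ => ((p.1, 2*p.2*θ p.1) : M × ℝ)) s :=
    continuous_fst.continuousOn.prodMk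
      (((continuous_const.mul continuous_snd).continuousOn).mul hθfst)
  have hfc : ContinuousOn f (s ∩ closure t) :=
    (hc.comp_continuousOn hin1).mono inter_subset_left
  have hin0 : ContinuousOn (fun p : M × ℝ => ((p.1, θ p.1) : M × ℝ)) s :=
    continuous_fst.continuousOn.prodMk hθfst
  have hinner : ContinuousOn (fun p : M × ℝ => Φ p.1 (θ p.1)) s :=
    hc.comp_continuousOn hin0
  have hinner2 : ContinuousOn (fun p : M × ℝ => ((Φ p.1 (θ p.1), 2*p.2 - 1) : M × ℝ))
      (s ∩ closure tᶜ) :=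
    (hinner.mono inter_subset_left).prodMk
      (((continuous_const.mul continuous_snd).sub continuous_const).continuousOn)
  have hgc : ContinuousOn g (s ∩ closure tᶜ) := by
    refine hH1.comp hinner2 ?_
    rintro ⟨z, τ⟩ ⟨⟨hzA, hτ⟩, hcl⟩
    have h12 : (1:ℝ)/2 ≤ τ := htcompl hcl
    refine ⟨hmaps z hzA, ?_, ?_⟩
    · simp only; linarith
    · simp only; linarith [hτ.2]
  have hpf : ∀ p ∈ s ∩ frontier t, f p = g p := by
    rintro ⟨z, τ⟩ ⟨⟨hzA, hτ⟩, hfr⟩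
    have h12 : τ = 1/2 := by
      have := frontier_le_subset_eq (continuous_snd) (continuous_const) hfr
      simpa using this
    simp only [hf, hg, h12]
    rw [show (2:ℝ)*(1/2)*θ z = θ z by ring, show (2:ℝ)*(1/2) - 1 = 0 by ring]
    exact (hH2 _ (hmaps z hzA)).symm
  have hcont : ContinuousOn (t.piecewise f g) s :=
    ContinuousOn.piecewise hpf hfc hgc
  refine ⟨t.piecewise f g, x₀, hcont, ?_, ?_⟩
  · intro v hv
    have hmem : ((v, (0:ℝ)) : M × ℝ) ∈ t := by simp [ht]
    rw [Set.piecewise_eq_of_mem _ _ _ hmem]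
    simp only [hf]
    rw [show (2:ℝ)*0*θ v = 0 by ring]
    exact h0 v
  · intro v hv
    have hmem : ((v, (1:ℝ)) : M × ℝ) ∉ t := by norm_num [ht]
    rw [Set.piecewise_eq_of_notMem _ _ _ hmem]
    simp only [hg]
    rw [show (2:ℝ)*1 - 1 = 1 by ring]
    exact hH3 _ (hmaps v hv)

end Nullhomotopy
/-- **(Theorem `xi=0`.)**  Let `Φ` be the flow of a smooth vector field on a
closed smooth manifold `M` and let `R` be its chain recurrent set.  If `R`
has finitely many connected components `R¹, …, R^r` then
`Σᵢ cat_M(Rⁱ) ≥ cat(M)`. -/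
theorem sum_cat_components_chainRecurrent_ge_cat
    (n : ℕ) (M : Type) [MetricSpace M]
    [ChartedSpace (EuclideanSpace ℝ (Fin n)) M]
    [IsManifold (𝓡 n) (⊤ : ℕ∞) M]
    [CompactSpace M]
    (v : (x : M) → TangentSpace (𝓡 n) x) (hv : IsSmoothVF v)
    (Φ : M → ℝ → M) (hΦ : IsFlowOf v Φ)
    (r : ℕ) (Rc : Fin r → Set M)
    (hne : ∀ i, (Rc i).Nonempty)
    (hinj : Function.Injective Rc)
    (hunion : (⋃ i, Rc i) = chainRecurrentSet Φ)
    (hcomp : ∀ i, ∀ x ∈ Rc i, Rc i = connectedComponentIn (chainRecurrentSet Φ) x) :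
    catSpace M ≤ ∑ i, catSet M (Rc i) := by
  classical
  obtain ⟨hc, h0, hadd, -⟩ := hΦ
  rcases isEmpty_or_nonempty M with hM | hM
  · have h0' : CatLE M (univ : Set M) 0 :=
      ⟨Fin.elim0, fun i => i.elim0,
        fun z _ => (IsEmpty.false z).elim, fun i => i.elim0⟩
    exact le_trans (Nat.sInf_le h0') (Nat.zero_le _)
  have hRclosed : IsClosed (chainRecurrentSet Φ) := isClosed_chainRecurrentSet hc hadd
  have hRcsub : ∀ i, Rc i ⊆ chainRecurrentSet Φ := by
    intro i z hz; rw [← hunion]; exact mem_iUnion.mpr ⟨i, hz⟩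
  have hRcconn : ∀ i, IsPreconnected (Rc i) := by
    intro i
    obtain ⟨x, hx⟩ := hne i
    rw [hcomp i x hx]
    exact isPreconnected_connectedComponentIn
  have hRcclosed : ∀ i, IsClosed (Rc i) := by
    intro i
    obtain ⟨x, hx⟩ := hne i
    rw [hcomp i x hx]
    exact isClosed_connectedComponentIn hRclosed x
  have hRcdisj : ∀ i j, i ≠ j → ∀ z, z ∈ Rc i → z ∈ Rc j → False := by
    intro i j hij z hzi hzj
    exact hij (hinj ((hcomp i z hzi).trans (hcomp j z hzj).symm))
  -- optimal covers of the components
  have hSne : ∀ i, {k | CatLE M (Rc i) k}.Nonempty := by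
    intro i
    obtain ⟨k, hk⟩ := exists_catLE_univ n (M := M)
    exact ⟨k, hk.mono (subset_univ _)⟩
  have hki : ∀ i, CatLE M (Rc i) (catSet M (Rc i)) := fun i => Nat.sInf_mem (hSne i)
  choose V hVopen hVcover hVnull using hki
  -- separating open sets O i
  set Q : Fin r → Set M := fun i => ⋃ j ∈ Finset.univ.erase i, Rc j with hQdef
  have hQclosed : ∀ i, IsClosed (Q i) := fun i =>
    Set.Finite.isClosed_biUnion (Finset.finite_toSet _) (fun j _ => hRcclosed j)
  have hQnot : ∀ i, ∀ z ∈ Rc i, z ∉ Q i := by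
    intro i z hz hzQ
    obtain ⟨j, hj, hzj⟩ := mem_iUnion₂.mp hzQ
    exact hRcdisj j i (Finset.ne_of_mem_erase hj) z hzj hz
  set g : Fin r → M → ℝ :=
    fun i z => if h : (Q i).Nonempty then infDist z (Q i) else 1 with hgdef
  have hgcont : ∀ i, Continuous (g i) := by
    intro i
    by_cases h : (Q i).Nonempty
    · simp only [hgdef, dif_pos h]; exact continuous_infDist_pt _
    · simp only [hgdef, dif_neg h]; exact continuous_const
  have hgpos : ∀ i, ∀ z ∈ Rc i, 0 < g i z := by
    intro i z hz
    by_cases h : (Q i).Nonempty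
    · simp only [hgdef, dif_pos h]
      exact ((hQclosed i).notMem_iff_infDist_pos h).mp (hQnot i z hz)
    · simp only [hgdef, dif_neg h]; norm_num
  have hgle : ∀ i j, j ≠ i → ∀ z, g i z ≤ infDist z (Rc j) := by
    intro i j hij z
    have hsub : Rc j ⊆ Q i := by
      intro w hw
      exact mem_iUnion₂.mpr ⟨j, Finset.mem_erase.mpr ⟨hij, Finset.mem_univ _⟩, hw⟩
    have h : (Q i).Nonempty := (hne j).mono hsub
    simp only [hgdef, dif_pos h]
    exact infDist_le_infDist_of_subset hsub (hne j)
  set W : Fin r → Set M := fun i => {z | infDist z (Rc i) < g i z / 2} with hWdef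
  have hWopen : ∀ i, IsOpen (W i) :=
    fun i => isOpen_lt (continuous_infDist_pt _) ((hgcont i).div_const 2)
  have hWRc : ∀ i, Rc i ⊆ W i := by
    intro i z hz
    simp only [hWdef, mem_setOf_eq, infDist_zero_of_mem hz]
    exact div_pos (hgpos i z hz) two_pos
  have hWdisj : ∀ i j, i ≠ j → ∀ z, z ∈ W i → z ∈ W j → False := by
    intro i j hij z h1 h2
    simp only [hWdef, mem_setOf_eq] at h1 h2
    have e1 : g i z ≤ infDist z (Rc j) := hgle i j (Ne.symm hij) z
    have e2 : g j z ≤ infDist z (Rc i) := hgle j i hij z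
    have n1 : 0 ≤ infDist z (Rc i) := infDist_nonneg
    have n2 : 0 ≤ infDist z (Rc j) := infDist_nonneg
    linarith
  set O : Fin r → Set M := fun i => W i ∩ ⋃ j, V i j with hOdef
  have hOopen : ∀ i, IsOpen (O i) :=
    fun i => (hWopen i).inter (isOpen_iUnion (hVopen i))
  have hORc : ∀ i, Rc i ⊆ O i := fun i z hz => ⟨hWRc i hz, hVcover i hz⟩
  have hOdisj : ∀ i j, i ≠ j → ∀ z, z ∈ O i → z ∈ O j → False :=
    fun i j hij z h1 h2 => hWdisj i j hij z h1.1 h2.1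
  have hOV : ∀ i, O i ⊆ ⋃ j, V i j := fun i => inter_subset_right
  have hRU : chainRecurrentSet Φ ⊆ ⋃ i, O i := by
    intro z hz
    rw [← hunion] at hz
    obtain ⟨i, hi⟩ := mem_iUnion.mp hz
    exact mem_iUnion.mpr ⟨i, hORc i hi⟩
  -- chain scale
  obtain ⟨δ₀, hδ₀, T₀, hT₀, hscale⟩ :=
    exists_scale hc hadd (isOpen_iUnion hOopen) hRU
  -- small neighbourhoods N i
  have hthick : ∀ i, ∃ ρ > 0, thickening ρ (Rc i) ⊆ O i := fun i =>
    ((hRcclosed i).isCompact).exists_thickening_subset_open (hOopen i) (hORc i)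
  choose ρ hρpos hρsub using hthick
  set N : Fin r → Set M := fun i => thickening (min (ρ i) (δ₀/4)) (Rc i) with hNdef
  have hNopen : ∀ i, IsOpen (N i) := fun i => isOpen_thickening
  have hNO : ∀ i, N i ⊆ O i :=
    fun i => (thickening_mono (min_le_left _ _) _).trans (hρsub i)
  have hNRc : ∀ i, Rc i ⊆ N i :=
    fun i => self_subset_thickening (lt_min (hρpos i) (by linarith)) _
  have hNnear : ∀ i, ∀ z ∈ N i, ∃ w ∈ Rc i, dist z w < δ₀/4 := by
    intro i z hz
    obtain ⟨w, hw, hd⟩ := mem_thickening_iff.mp hz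
    exact ⟨w, hw, hd.trans_le (min_le_right _ _)⟩
  -- windows
  have hL0 : (0:ℝ) < T₀ := by linarith
  set G : Fin r → ℕ → Set M :=
    fun i m => {x | ∀ t ∈ Icc ((m:ℝ)*T₀) ((m:ℝ)*T₀ + 2*T₀), Φ x t ∈ N i} with hGdef
  have hGopen : ∀ i m, IsOpen (G i m) := fun i m => isOpen_tube hc (hNopen i) _ _
  set B : Fin r → Set M := fun i => ⋃ m, G i m with hBdef
  have hBopen : ∀ i, IsOpen (B i) := fun i => isOpen_iUnion (hGopen i)
  -- time selection
  have hθex := fun i => exists_theta (G i) (hGopen i) T₀ hL0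
  choose θ hθcont hθspec using hθex
  have hkey : ∀ i, ∀ x ∈ B i, Φ x (θ i x) ∈ O i := by
    intro i x hx
    obtain ⟨m, m', hGm, hGm', hmm', hlow, hup⟩ := hθspec i x hx
    have hab : (m:ℝ)*T₀ ≤ (m':ℝ)*T₀ := by
      have : (m:ℝ) ≤ (m':ℝ) := by exact_mod_cast hmm'
      exact mul_le_mul_of_nonneg_right this hL0.le
    have hseg := segment_trapped hc hadd hδ₀ hT₀ hOopen hOdisj hscale
      (hRcconn i) (hRcsub i) (hNO i) (hNnear i)
      (le_refl T₀) hab hGm hGm'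
    exact hseg (θ i x) ⟨hlow, by linarith⟩
  -- the B i cover M
  have hcover : ∀ x : M, ∃ i, x ∈ B i := by
    intro x
    obtain ⟨l, hl⟩ := omega_trapped hc hadd O hOopen hOdisj hRU x
    have hωRc : omegaSet Φ x ⊆ Rc l := by
      intro y hy
      have hyR := omegaSet_subset_chainRecurrentSet hc hadd x hy
      rw [← hunion] at hyR
      obtain ⟨j, hj⟩ := mem_iUnion.mp hyR
      rcases eq_or_ne j l with rfl | hjl
      · exact hj
      · exact absurd (hOdisj j l hjl y (hORc j hj) (hl hy)) not_false
  -- continue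
    have hωN : omegaSet Φ x ⊆ N l := hωRc.trans (hNRc l)
    obtain ⟨Tt, hTt⟩ := eventually_mem_of_omega_subset x (hNopen l) hωN
    obtain ⟨m, hm⟩ := exists_nat_ge (Tt / T₀)
    refine ⟨l, mem_iUnion.mpr ⟨m, ?_⟩⟩
    intro t ht
    refine hTt t ?_
    have : Tt ≤ (m:ℝ)*T₀ := by
      rw [div_le_iff₀ hL0] at hm; linarith
    linarith [ht.1]
  -- each B i has a small categorical cover
  have hBcat : ∀ i, CatLE M (B i) (catSet M (Rc i)) := by
    intro i
    refine ⟨fun j => B i ∩ (fun x => Φ x (θ i x)) ⁻¹' (V i j), ?_, ?_, ?_⟩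
    · intro j
      refine ContinuousOn.isOpen_inter_preimage ?_ (hBopen i) (hVopen i j)
      exact hc.comp_continuousOn ((continuousOn_id).prodMk (hθcont i))
    · intro x hx
      obtain ⟨j, hj⟩ := mem_iUnion.mp (hOV i (hkey i x hx))
      exact mem_iUnion.mpr ⟨j, hx, hj⟩
    · intro j
      refine nullhomotopic_of_flow_into hc h0 (inter_subset_left) (hθcont i)
        (hVnull i j) ?_
      intro x hx
      exact hx.2
  -- assemble
  have hunionB : ∀ s : Finset (Fin r),
      CatLE M (⋃ i ∈ s, B i) (∑ i ∈ s, catSet M (Rc i)) := by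
    intro s
    induction s using Finset.induction with
    | empty => simpa using catLE_empty
    | insert _ _ ha ih =>
        rw [Finset.set_biUnion_insert, Finset.sum_insert ha]
        exact (hBcat _).union ih
  have hfinal : CatLE M (univ : Set M) (∑ i, catSet M (Rc i)) := by
    refine (hunionB Finset.univ).mono ?_
    intro x _
    obtain ⟨i, hi⟩ := hcover x
    exact mem_iUnion₂.mpr ⟨i, Finset.mem_univ i, hi⟩
  exact Nat.sInf_le hfinal
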